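/- Let θ ∈ (0, π/2) with sin(2θ) ≠ 0 and let m be a positive integer. If j is chosen uniformly from {1,...,m}, then the average of sin²((2j-1)θ) over j ∈ {1,...,m} equals 1/2 - sin(4mθ)/(4m·sin(2θ)). -/

import Mathlib

open Real

lemma grover_cos_sum (φ : ℝ) (m : ℕ) :
    (∑ j ∈ Finset.Icc 1 m, Real.cos ((2 * (j : ℝ) - 1) * φ)) * (2 * Real.sin φ) =
      Real.sin (2 * (m : ℝ) * φ) := by
  induction m with
  | zero => simp
  | succ n ih =>
    rw [Finset.sum_Icc_succ_top (by omega : 1 ≤ n + 1), add_mul, ih]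
    push_cast
    have h1 : 2 * ((n : ℝ) + 1) * φ = 2 * (n : ℝ) * φ + φ + φ := by ring
    have h2 : (2 * ((n : ℝ) + 1) - 1) * φ = 2 * (n : ℝ) * φ + φ := by ring
    rw [h1, h2, Real.sin_add, Real.sin_add, Real.cos_add]
    linear_combination (-Real.sin (2 * (n : ℝ) * φ)) * Real.sin_sq_add_cos_sq φ

/-- Average success probability in Grover's search with an unknown number of
solutions: for `θ ∈ (0, π/2)` with `sin(2θ) ≠ 0` and `j` uniform on
`{1,…,m}`, the average of `sin²((2j-1)θ)` equals
`1/2 - sin(4mθ)/(4m·sin(2θ))`. -/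
theorem grover_average_success (θ : ℝ) (hθ₀ : 0 < θ) (hθ₁ : θ < π / 2)
    (hs : Real.sin (2 * θ) ≠ 0) (m : ℕ) (hm : 0 < m) :
    (1 / (m : ℝ)) * ∑ j ∈ Finset.Icc 1 m, Real.sin ((2 * (j : ℝ) - 1) * θ) ^ 2 =
      1 / 2 - Real.sin (4 * (m : ℝ) * θ) / (4 * (m : ℝ) * Real.sin (2 * θ)) := by
  have key := grover_cos_sum (2 * θ) m
  have hmne : (m : ℝ) ≠ 0 := Nat.cast_ne_zero.mpr hm.ne'
  have hsum : ∑ j ∈ Finset.Icc 1 m, Real.sin ((2 * (j : ℝ) - 1) * θ) ^ 2 =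
      (m : ℝ) / 2 - (∑ j ∈ Finset.Icc 1 m, Real.cos ((2 * (j : ℝ) - 1) * (2 * θ))) / 2 := by
    have hterm : ∀ j : ℕ, Real.sin ((2 * (j : ℝ) - 1) * θ) ^ 2 =
        1 / 2 - Real.cos ((2 * (j : ℝ) - 1) * (2 * θ)) / 2 := fun j => by
      rw [Real.sin_sq_eq_half_sub]; ring_nf
    rw [Finset.sum_congr rfl fun j _ => hterm j, Finset.sum_sub_distrib,
      Finset.sum_const, Nat.card_Icc, ← Finset.sum_div]
    push_cast [Nat.add_sub_cancel]
    ring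
  rw [hsum]
  have hC : (∑ j ∈ Finset.Icc 1 m, Real.cos ((2 * (j : ℝ) - 1) * (2 * θ))) =
      Real.sin (4 * (m : ℝ) * θ) / (2 * Real.sin (2 * θ)) := by
    have h4 : Real.sin (2 * (m : ℝ) * (2 * θ)) = Real.sin (4 * (m : ℝ) * θ) := by ring_nf
    rw [← h4, ← key, mul_div_assoc, div_self (mul_ne_zero two_ne_zero hs), mul_one]
  rw [hC]
  field_simp
  ring
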